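/- Fix an integer m ≥ 2. Let M = (m_{ij}) be an m×2 integer matrix and let q be a nonzero integer such that q divides every 2×2 minor of M, and such that no prime p dividing q divides all the entries of M. Then Λ_q = { v ∈ ℤ² : q divides every coordinate of Mv } is a sublattice (subgroup) of ℤ² of index [ℤ² : Λ_q] = |q|. -/

import Mathlib

/-- Auxiliary subgroup: solutions of a single linear equation in `(ZMod n)²`. -/
def linSub (n : ℕ) (c₀ c₁ : ZMod n) : AddSubgroup (Fin 2 → ZMod n) where
  carrier := {s | s 0 * c₀ + s 1 * c₁ = 0}
  zero_mem' := by simp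
  add_mem' {x y} hx hy := by
    simp only [Set.mem_setOf_eq, Pi.add_apply] at *
    linear_combination hx + hy
  neg_mem' {x} hx := by
    simp only [Set.mem_setOf_eq, Pi.neg_apply] at *
    linear_combination -hx

theorem mem_linSub {n : ℕ} {c₀ c₁ : ZMod n} {s : Fin 2 → ZMod n} :
    s ∈ linSub n c₀ c₁ ↔ s 0 * c₀ + s 1 * c₁ = 0 := Iff.rfl

/-- The rows of an integer matrix reduced mod `n`. -/
def rowMod (n : ℕ) {m : ℕ} (M : Matrix (Fin m) (Fin 2) ℤ) (i : Fin m) : Fin 2 → ZMod n :=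
  fun j => ((M i j : ℤ) : ZMod n)

@[simp] theorem rowMod_apply (n : ℕ) {m : ℕ} (M : Matrix (Fin m) (Fin 2) ℤ) (i : Fin m)
    (j : Fin 2) : rowMod n M i j = ((M i j : ℤ) : ZMod n) := rfl

/-- For `m ≥ 2`, an `m×2` integer matrix `M`, and a nonzero integer `q`
dividing every 2×2 minor of `M`, such that no prime dividing `q` divides all entries
of `M`, the subgroup `Λ_q = {v ∈ ℤ² : q ∣ Mv}` of `ℤ²` has index `|q|`. -/
theorem stmt_2 (m : ℕ) (hm : 2 ≤ m) (M : Matrix (Fin m) (Fin 2) ℤ)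
    (q : ℤ) (hq : q ≠ 0)
    (hminor : ∀ i j : Fin m, q ∣ M i 0 * M j 1 - M i 1 * M j 0)
    (hprim : ∀ p : ℕ, p.Prime → (p : ℤ) ∣ q → ∃ i j, ¬ (p : ℤ) ∣ M i j)
    (Λ : AddSubgroup (Fin 2 → ℤ))
    (hΛ : ∀ v, v ∈ Λ ↔ ∀ i, q ∣ M.mulVec v i) :
    Λ.index = q.natAbs := by
  classical
  set n : ℕ := q.natAbs with hn
  have hn0 : n ≠ 0 := Int.natAbs_ne_zero.mpr hq
  haveI : NeZero n := ⟨hn0⟩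
  have hnq : (n : ℤ) ∣ q := Int.natAbs_dvd.mpr dvd_rfl
  -- divisibility by q vs reduction mod n
  have hdvd_iff : ∀ x : ℤ, q ∣ x ↔ ((x : ZMod n) = 0) := by
    intro x
    rw [ZMod.intCast_zmod_eq_zero_iff_dvd, hn, Int.natAbs_dvd]
  -- minors vanish mod n
  have hminor' : ∀ i k : Fin m,
      rowMod n M i 0 * rowMod n M k 1 - rowMod n M i 1 * rowMod n M k 0 = 0 := by
    intro i k
    have h0 : ((M i 0 * M k 1 - M i 1 * M k 0 : ℤ) : ZMod n) = 0 :=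
      (hdvd_iff _).mp (hminor i k)
    push_cast at h0
    simpa using h0
  -- the subgroup generated by the rows mod n
  set R : AddSubgroup (Fin 2 → ZMod n) := AddSubgroup.closure (Set.range (rowMod n M)) with hR
  have hrR : ∀ i, rowMod n M i ∈ R := fun i => AddSubgroup.subset_closure ⟨i, rfl⟩
  have hR_lin : ∀ c₀ c₁ : ZMod n, (∀ i, rowMod n M i ∈ linSub n c₀ c₁) →
      R ≤ linSub n c₀ c₁ := by
    intro c₀ c₁ h
    rw [hR]
    refine (AddSubgroup.closure_le _).mpr ?_
    rintro s ⟨i, rfl⟩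
    exact h i
  -- exponent of R equals n
  have hexp_dvd : AddMonoid.exponent R ∣ n := by
    rw [AddMonoid.exponent_dvd_iff_forall_nsmul_eq_zero]
    intro g
    apply Subtype.ext
    show n • (g : Fin 2 → ZMod n) = 0
    funext j
    simp [nsmul_eq_mul, ZMod.natCast_self]
  have hexp0 : AddMonoid.exponent R ≠ 0 := AddMonoid.exponent_ne_zero_of_finite
  have hdvd_exp : n ∣ AddMonoid.exponent R := by
    rw [← Nat.factorization_le_iff_dvd hn0 hexp0, Finsupp.le_def]
    intro p
    by_cases hfp : n.factorization p = 0
    · simp [hfp]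
    have hp : p.Prime := Nat.prime_of_mem_primeFactors (Nat.support_factorization n ▸
      Finsupp.mem_support_iff.mpr hfp)
    rw [← (Nat.Prime.pow_dvd_iff_le_factorization hp hexp0)]
    have hpn : p ∣ n := Nat.dvd_of_factorization_pos hfp
    have hpq : (p : ℤ) ∣ q := dvd_trans (Int.natCast_dvd_natCast.mpr hpn) hnq
    obtain ⟨i, j, hij⟩ := hprim p hp hpq
    set k : ℕ := n.factorization p with hk
    -- the row i has order divisible by p^k
    set gi : R := ⟨rowMod n M i, hrR i⟩ with hgi
    have hoeq : addOrderOf (rowMod n M i) = addOrderOf gi := by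
      have := addOrderOf_injective R.subtype Subtype.coe_injective gi
      exact this
    set o : ℕ := addOrderOf (rowMod n M i) with ho
    have hzero : o • rowMod n M i = 0 := by
      rw [ho]; exact addOrderOf_nsmul_eq_zero _
    have hcoord : ((o * M i j : ℤ) : ZMod n) = 0 := by
      have := congrFun hzero j
      simp only [Pi.smul_apply, rowMod_apply, Pi.zero_apply, nsmul_eq_mul] at this
      push_cast
      simpa using this
    have hdvd1 : (n : ℤ) ∣ (o : ℤ) * M i j := by
      rwa [ZMod.intCast_zmod_eq_zero_iff_dvd] at hcoord
    have hpk : ((p : ℤ)) ^ k ∣ (o : ℤ) * M i j := by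
      refine dvd_trans ?_ hdvd1
      have : (p : ℕ) ^ k ∣ n := Nat.ordProj_dvd n p
      exact_mod_cast Int.natCast_dvd_natCast.mpr this
    have hpko : ((p : ℤ)) ^ k ∣ (o : ℤ) :=
      (Nat.prime_iff_prime_int.mp hp).pow_dvd_of_dvd_mul_right k hij hpk
    have hpko' : p ^ k ∣ o := by exact_mod_cast hpko
    calc p ^ k ∣ o := hpko'
      _ ∣ AddMonoid.exponent R := hoeq ▸ AddMonoid.addOrder_dvd_exponent gi
  have hexp : AddMonoid.exponent R = n := Nat.dvd_antisymm hexp_dvd hdvd_exp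
  -- pick an element of R of order n
  obtain ⟨g, hg⟩ := AddMonoid.exists_addOrderOf_eq_exponent
    (AddMonoid.ExponentExists.of_finite (G := R))
  set s : Fin 2 → ZMod n := (g : Fin 2 → ZMod n) with hs
  have hsR : s ∈ R := g.2
  have hord : addOrderOf s = n := by
    have := addOrderOf_injective R.subtype Subtype.coe_injective g
    simp only [AddSubgroup.coe_subtype] at this
    rw [hs, this, hg, hexp]
  set a : ZMod n := s 0 with ha
  set b : ZMod n := s 1 with hb
  -- gcd(a.val, b.val, n) = 1
  have hg1 : Nat.gcd (Nat.gcd a.val b.val) n = 1 := by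
    set g0 : ℕ := Nat.gcd (Nat.gcd a.val b.val) n with hg0
    have hg0n : g0 ∣ n := Nat.gcd_dvd_right _ _
    have hval : ∀ j : Fin 2, g0 ∣ (s j).val := by
      intro j
      fin_cases j
      · exact dvd_trans (Nat.gcd_dvd_left _ _) (Nat.gcd_dvd_left _ _)
      · exact dvd_trans (Nat.gcd_dvd_left _ _) (Nat.gcd_dvd_right _ _)
    have hsmul : (n / g0) • s = 0 := by
      funext j
      obtain ⟨c, hc⟩ := hval j
      have hsj : ((s j).val : ZMod n) = s j := by
        rw [ZMod.natCast_val, ZMod.cast_id]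
      have : ((n / g0 * (s j).val : ℕ) : ZMod n) = 0 := by
        rw [ZMod.natCast_eq_zero_iff]
        refine ⟨c, ?_⟩
        rw [hc, ← mul_assoc, Nat.div_mul_cancel hg0n]
      push_cast at this
      rw [hsj] at this
      simpa [nsmul_eq_mul] using this
    have hodvd : addOrderOf s ∣ n / g0 := addOrderOf_dvd_of_nsmul_eq_zero hsmul
    rw [hord] at hodvd
    have hdvd' : n / g0 ∣ n := Nat.div_dvd_of_dvd hg0n
    have heq : n / g0 = n := Nat.dvd_antisymm hdvd' hodvd
    have := Nat.mul_div_cancel' hg0n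
    rw [heq] at this
    have := Nat.eq_of_mul_eq_mul_right (Nat.pos_of_ne_zero hn0)
      (by rw [this, one_mul] : g0 * n = 1 * n)
    exact this
  -- Bezout: c * a + d * b = 1 in ZMod n
  obtain ⟨c, d, hcd⟩ : ∃ c d : ZMod n, c * a + d * b = 1 := by
    set g1 : ℕ := Nat.gcd a.val b.val with hg1'
    have h1 : ((Nat.gcd g1 n : ℕ) : ℤ) = g1 * Nat.gcdA g1 n + n * Nat.gcdB g1 n :=
      Nat.gcd_eq_gcd_ab g1 n
    rw [hg1] at h1
    have h2 : ((g1 : ℕ) : ℤ) = a.val * Nat.gcdA a.val b.val + b.val * Nat.gcdB a.val b.val :=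
      Nat.gcd_eq_gcd_ab a.val b.val
    set u := Nat.gcdA g1 n
    set v := Nat.gcdB g1 n
    set α := Nat.gcdA a.val b.val
    set β := Nat.gcdB a.val b.val
    have hZ : (a.val : ℤ) * (α * u) + (b.val : ℤ) * (β * u) + n * v = 1 := by
      push_cast at h1
      linear_combination (-(u : ℤ)) * h2 - h1
    refine ⟨((α * u : ℤ) : ZMod n), ((β * u : ℤ) : ZMod n), ?_⟩
    have := congrArg (fun z : ℤ => (z : ZMod n)) hZ
    push_cast at this ⊢
    rw [ZMod.natCast_self] at this
    have hav : ((a.val : ℕ) : ZMod n) = a := by rw [ZMod.natCast_val, ZMod.cast_id]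
    have hbv : ((b.val : ℕ) : ZMod n) = b := by rw [ZMod.natCast_val, ZMod.cast_id]
    rw [hav, hbv] at this
    linear_combination this
  -- orthogonality: a * (row k 1) - b * (row k 0) = 0
  have hTa : ∀ k : Fin m, a * rowMod n M k 1 - b * rowMod n M k 0 = 0 := by
    intro k
    have hmem : s ∈ linSub n (rowMod n M k 1) (-(rowMod n M k 0)) := by
      refine hR_lin _ _ (fun i => ?_) hsR
      rw [mem_linSub]
      linear_combination hminor' i k
    rw [mem_linSub] at hmem
    rw [← ha, ← hb] at hmem
    linear_combination hmem
  -- the kernel subgroup K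
  set K : AddSubgroup (Fin 2 → ZMod n) := ⨅ k : Fin m, linSub n (rowMod n M k 0) (rowMod n M k 1)
    with hK
  have hKmem : ∀ w : Fin 2 → ZMod n,
      w ∈ K ↔ ∀ k, w 0 * rowMod n M k 0 + w 1 * rowMod n M k 1 = 0 := by
    intro w
    rw [hK]
    simp only [AddSubgroup.mem_iInf, mem_linSub]
  -- Card of K is n via explicit bijection with ZMod n
  have hKcard : Nat.card K = n := by
    have hmemf : ∀ t : ZMod n, (![b * t, -(a * t)] : Fin 2 → ZMod n) ∈ K := by
      intro t
      rw [hKmem]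
      intro k
      simp only [Matrix.cons_val_zero, Matrix.cons_val_one, Matrix.head_cons]
      linear_combination (-t) * hTa k
    have haw : ∀ w ∈ K, a * w 0 + b * w 1 = 0 := by
      intro w hw
      have hmem : s ∈ linSub n (w 0) (w 1) := by
        refine hR_lin _ _ (fun i => ?_) hsR
        rw [mem_linSub]
        have := (hKmem w).mp hw i
        linear_combination this
      rw [mem_linSub] at hmem
      rw [← ha, ← hb] at hmem
      linear_combination hmem
    let e : ZMod n ≃ K :=
      { toFun := fun t => ⟨![b * t, -(a * t)], hmemf t⟩
        invFun := fun w => d * (w : Fin 2 → ZMod n) 0 - c * (w : Fin 2 → ZMod n) 1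
        left_inv := by
          intro t
          simp only [Matrix.cons_val_zero, Matrix.cons_val_one, Matrix.head_cons]
          linear_combination t * hcd
        right_inv := by
          rintro ⟨w, hw⟩
          have hweq := haw w hw
          apply Subtype.ext
          funext j
          fin_cases j
          · show b * (d * w 0 - c * w 1) = w 0
            linear_combination (-c) * hweq + (w 0) * hcd
          · show -(a * (d * w 0 - c * w 1)) = w 1
            linear_combination (-d) * hweq + (w 1) * hcd }
    rw [← Nat.card_congr e, Nat.card_zmod]
  -- the reduction homomorphism
  let π : (Fin 2 → ℤ) →+ (Fin 2 → ZMod n) :=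
    { toFun := fun v j => ((v j : ℤ) : ZMod n)
      map_zero' := by funext j; simp
      map_add' := by intro v w; funext j; push_cast; simp }
  have hπ : Function.Surjective π := by
    intro w
    refine ⟨fun j => ((w j).val : ℤ), ?_⟩
    funext j
    show (((w j).val : ℤ) : ZMod n) = w j
    rw [Int.cast_natCast, ZMod.natCast_val, ZMod.cast_id]
  have hΛeq : Λ = K.comap π := by
    ext v
    rw [hΛ, AddSubgroup.mem_comap, hKmem]
    have hcast : ∀ i : Fin m, ((M.mulVec v i : ℤ) : ZMod n) =
        (π v) 0 * rowMod n M i 0 + (π v) 1 * rowMod n M i 1 := by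
      intro i
      have hmv : M.mulVec v i = M i 0 * v 0 + M i 1 * v 1 := by
        simp [Matrix.mulVec, dotProduct, Fin.sum_univ_two]
      rw [hmv]
      push_cast
      simp only [rowMod_apply]
      show ((M i 0 : ℤ) : ZMod n) * ((v 0 : ℤ) : ZMod n) + ((M i 1 : ℤ) : ZMod n) * ((v 1 : ℤ) : ZMod n) =
        ((v 0 : ℤ) : ZMod n) * ((M i 0 : ℤ) : ZMod n) + ((v 1 : ℤ) : ZMod n) * ((M i 1 : ℤ) : ZMod n)
      ring
    constructor
    · intro h k
      rw [← hcast k]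
      exact (hdvd_iff _).mp (h k)
    · intro h i
      rw [hdvd_iff, hcast i]
      exact h i
  -- index computation
  have hbig : Nat.card (Fin 2 → ZMod n) = n * n := by
    rw [Nat.card_pi, Finset.prod_const, Finset.card_univ, Fintype.card_fin, Nat.card_zmod,
      pow_two]
  have hKindex : K.index = n := by
    have h := AddSubgroup.index_mul_card K
    rw [hKcard, hbig] at h
    exact Nat.eq_of_mul_eq_mul_right (Nat.pos_of_ne_zero hn0) h
  rw [hΛeq, AddSubgroup.index_comap_of_surjective K hπ, hKindex]
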